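/- For x_p, x_q ∈ ℝ^{2n}, the residual x_p − μ*(θ) with μ*(θ) = φ_p x_p + φ_q x_q, φ_p = I_{2n} − (σ_p²/(σ_p²+σ_q²))Q, φ_q = (σ_p²/(σ_p²+σ_q²)) Q R(θ)ᵀ, satisfies ‖x_p − μ*(θ)‖² = (σ_p²/(σ_p²+σ_q²))² · ‖x_q − R(θ)x_p‖²_Q, where ‖z‖²_Q = zᵀQz. -/
import Mathlib


open Matrix Real Kronecker

noncomputable def rot (θ : ℝ) : Matrix (Fin 2) (Fin 2) ℝ :=
  !![Real.cos θ, -Real.sin θ; Real.sin θ, Real.cos θ]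

noncomputable def Fmat (n : ℕ) : Matrix (Fin n × Fin 2) (Fin 1 × Fin 2) ℝ :=
  (Matrix.of fun (_ : Fin n) (_ : Fin 1) => (1 : ℝ)) ⊗ₖ (1 : Matrix (Fin 2) (Fin 2) ℝ)

noncomputable def Qmat (n : ℕ) : Matrix (Fin n × Fin 2) (Fin n × Fin 2) ℝ :=
  1 - Fmat n * ((Fmat n)ᵀ * Fmat n)⁻¹ * (Fmat n)ᵀ

noncomputable def Rblk (m : ℕ) (θ : ℝ) : Matrix (Fin m × Fin 2) (Fin m × Fin 2) ℝ :=
  (1 : Matrix (Fin m) (Fin m) ℝ) ⊗ₖ rot θ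

noncomputable def sqn {ι : Type*} [Fintype ι] (z : ι → ℝ) : ℝ := z ⬝ᵥ z

/-! Auxiliary lemmas -/

noncomputable def Jmat (n : ℕ) : Matrix (Fin n) (Fin n) ℝ := Matrix.of fun _ _ => (1 : ℝ)

lemma FtF (n : ℕ) : (Fmat n)ᵀ * Fmat n = (n : ℝ) • 1 := by
  unfold Fmat
  rw [← Matrix.kroneckerMap_transpose, Matrix.transpose_one, ← Matrix.mul_kronecker_mul,
    Matrix.one_mul]
  have h : ((Matrix.of fun (_ : Fin n) (_ : Fin 1) => (1 : ℝ))ᵀ *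
      (Matrix.of fun (_ : Fin n) (_ : Fin 1) => (1 : ℝ))) = (n : ℝ) • 1 := by
    ext i j
    fin_cases i; fin_cases j
    simp [Matrix.mul_apply]
  rw [h, Matrix.smul_kronecker, Matrix.one_kronecker_one]

lemma FtF_inv (n : ℕ) (hn : 1 ≤ n) : ((Fmat n)ᵀ * Fmat n)⁻¹ = (n : ℝ)⁻¹ • 1 := by
  have hn0 : (n : ℝ) ≠ 0 := by positivity
  rw [FtF]
  apply Matrix.inv_eq_right_inv
  rw [Matrix.smul_mul, Matrix.mul_smul, Matrix.one_mul, smul_smul, mul_inv_cancel₀ hn0, one_smul]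

lemma FFt (n : ℕ) : Fmat n * (Fmat n)ᵀ = (Jmat n) ⊗ₖ (1 : Matrix (Fin 2) (Fin 2) ℝ) := by
  unfold Fmat
  rw [← Matrix.kroneckerMap_transpose, Matrix.transpose_one, ← Matrix.mul_kronecker_mul,
    Matrix.one_mul]
  congr 1
  ext i j
  simp [Matrix.mul_apply, Jmat]

lemma Qmat_eq (n : ℕ) (hn : 1 ≤ n) :
    Qmat n = 1 - (n : ℝ)⁻¹ • ((Jmat n) ⊗ₖ (1 : Matrix (Fin 2) (Fin 2) ℝ)) := by
  unfold Qmat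
  rw [FtF_inv n hn, Matrix.mul_smul, Matrix.mul_one, Matrix.smul_mul, FFt]

lemma J_mul_J (n : ℕ) : Jmat n * Jmat n = (n : ℝ) • Jmat n := by
  ext i j; simp [Matrix.mul_apply, Jmat]

lemma Qmat_symm (n : ℕ) (hn : 1 ≤ n) : (Qmat n)ᵀ = Qmat n := by
  rw [Qmat_eq n hn, Matrix.transpose_sub, Matrix.transpose_one, Matrix.transpose_smul,
    ← Matrix.kroneckerMap_transpose, Matrix.transpose_one]
  congr 3

lemma Qmat_idem (n : ℕ) (hn : 1 ≤ n) : Qmat n * Qmat n = Qmat n := by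
  have hn0 : (n : ℝ) ≠ 0 := by positivity
  rw [Qmat_eq n hn]
  set P := (Jmat n) ⊗ₖ (1 : Matrix (Fin 2) (Fin 2) ℝ) with hP
  have hPP : P * P = (n : ℝ) • P := by
    rw [hP, ← Matrix.mul_kronecker_mul, Matrix.one_mul, J_mul_J, Matrix.smul_kronecker]
  rw [Matrix.sub_mul, Matrix.mul_sub, Matrix.mul_sub, Matrix.one_mul, Matrix.one_mul,
    Matrix.mul_one, Matrix.smul_mul, Matrix.mul_smul, smul_smul, hPP, smul_smul]
  have h3 : (n : ℝ)⁻¹ * (n : ℝ)⁻¹ * (n : ℝ) = (n : ℝ)⁻¹ := by field_simp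
  rw [h3]
  abel

lemma rotT_eq (θ : ℝ) : (rot θ)ᵀ = !![Real.cos θ, Real.sin θ; -Real.sin θ, Real.cos θ] := by
  ext i j
  fin_cases i <;> fin_cases j <;> simp [rot]

lemma rot_mul_rotT (θ : ℝ) : rot θ * (rot θ)ᵀ = 1 := by
  rw [rotT_eq, rot, Matrix.mul_fin_two]
  ext i j
  fin_cases i <;> fin_cases j <;> simp [Matrix.one_apply] <;> nlinarith [sin_sq_add_cos_sq θ]

lemma rotT_mul_rot (θ : ℝ) : (rot θ)ᵀ * rot θ = 1 := by
  rw [rotT_eq, rot, Matrix.mul_fin_two]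
  ext i j
  fin_cases i <;> fin_cases j <;> simp [Matrix.one_apply] <;> nlinarith [sin_sq_add_cos_sq θ]

lemma Rblk_mul_RblkT (n : ℕ) (θ : ℝ) : Rblk n θ * (Rblk n θ)ᵀ = 1 := by
  unfold Rblk
  rw [← Matrix.kroneckerMap_transpose, Matrix.transpose_one, ← Matrix.mul_kronecker_mul,
    Matrix.one_mul, rot_mul_rotT, Matrix.one_kronecker_one]

lemma RblkT_mul_Rblk (n : ℕ) (θ : ℝ) : (Rblk n θ)ᵀ * Rblk n θ = 1 := by
  unfold Rblk
  rw [← Matrix.kroneckerMap_transpose, Matrix.transpose_one, ← Matrix.mul_kronecker_mul,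
    Matrix.one_mul, rotT_mul_rot, Matrix.one_kronecker_one]

lemma Q_comm_R (n : ℕ) (hn : 1 ≤ n) (θ : ℝ) :
    Qmat n * Rblk n θ = Rblk n θ * Qmat n := by
  rw [Qmat_eq n hn]
  have h : ((Jmat n) ⊗ₖ (1 : Matrix (Fin 2) (Fin 2) ℝ)) * Rblk n θ
      = Rblk n θ * ((Jmat n) ⊗ₖ (1 : Matrix (Fin 2) (Fin 2) ℝ)) := by
    unfold Rblk
    rw [← Matrix.mul_kronecker_mul, ← Matrix.mul_kronecker_mul, Matrix.one_mul,
      Matrix.mul_one, Matrix.one_mul, Matrix.mul_one]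
  rw [Matrix.sub_mul, Matrix.mul_sub, Matrix.one_mul, Matrix.mul_one,
    Matrix.smul_mul, Matrix.mul_smul, h]

lemma mulVec_dot {ι : Type*} [Fintype ι] (A : Matrix ι ι ℝ) (u w : ι → ℝ) :
    A.mulVec u ⬝ᵥ w = u ⬝ᵥ Aᵀ.mulVec w := by
  rw [Matrix.dotProduct_mulVec, Matrix.vecMul_transpose, dotProduct_comm]

theorem residual_norm (n : ℕ) (hn : 1 ≤ n) (θ : ℝ) (σp σq : ℝ) (hp : 0 < σp) (hq : 0 < σq)
    (xp xq : Fin n × Fin 2 → ℝ) :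
    let c : ℝ := σp ^ 2 / (σp ^ 2 + σq ^ 2)
    let φp : Matrix (Fin n × Fin 2) (Fin n × Fin 2) ℝ := 1 - c • Qmat n
    let φq : Matrix (Fin n × Fin 2) (Fin n × Fin 2) ℝ := c • (Qmat n * (Rblk n θ)ᵀ)
    let μstar : Fin n × Fin 2 → ℝ := φp.mulVec xp + φq.mulVec xq
    sqn (xp - μstar)
      = c ^ 2 * ((xq - (Rblk n θ).mulVec xp) ⬝ᵥ (Qmat n).mulVec (xq - (Rblk n θ).mulVec xp)) := by
  intro c φp φq μstar
  set Q := Qmat n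
  set R := Rblk n θ
  set v : Fin n × Fin 2 → ℝ := xp - (R)ᵀ.mulVec xq with hv
  have h1 : xp - μstar = c • Q.mulVec v := by
    show xp - ((1 - c • Q).mulVec xp + (c • (Q * Rᵀ)).mulVec xq) = _
    rw [Matrix.sub_mulVec, Matrix.one_mulVec, Matrix.smul_mulVec,
      Matrix.smul_mulVec, ← Matrix.mulVec_mulVec, hv, Matrix.mulVec_sub, smul_sub]
    abel
  have h2 : xq - R.mulVec xp = -(R.mulVec v) := by
    rw [hv, Matrix.mulVec_sub, Matrix.mulVec_mulVec, Rblk_mul_RblkT, Matrix.one_mulVec]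
    abel
  rw [h1, h2, sqn]
  rw [dotProduct_smul, smul_dotProduct, smul_smul, ← sq, smul_eq_mul]
  rw [Matrix.mulVec_neg, dotProduct_neg, neg_dotProduct, neg_neg]
  congr 1
  rw [mulVec_dot, Matrix.mulVec_mulVec, Qmat_symm n hn, Qmat_idem n hn]
  rw [mulVec_dot, Matrix.mulVec_mulVec, Matrix.mulVec_mulVec, Matrix.mul_assoc,
    Q_comm_R n hn θ, ← Matrix.mul_assoc, RblkT_mul_Rblk, Matrix.one_mul]
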